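/- arXiv:1302.5248 — 3 statements merged into one kernel-verified Lean document; each statement's English description precedes it below -/
import Mathlib

section
/- Let E(t) = sin t + i·ξ(t) with ξ'(t) = sin²t/√(1+sin²t). The signed curvature of the curve E at parameter t equals 2·sin t. -/
open Real

/-- The function ξ, antiderivative of sin²t/√(1+sin²t) vanishing at 0. -/
noncomputable def xi (t : ℝ) : ℝ := ∫ r in (0:ℝ)..t, Real.sin r ^ 2 / Real.sqrt (1 + Real.sin r ^ 2)

/-- The rectangular elastica E(t) = sin t + i ξ(t). -/
noncomputable def E (t : ℝ) : ℂ := Real.sin t + xi t * Complex.I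

/-- Signed curvature of a planar curve f (as a function of the parameter t),
given by the classical formula (x'y'' − y'x'')/|f'|³. -/
noncomputable def signedCurvature (f : ℝ → ℂ) (t : ℝ) : ℝ :=
  ((deriv f t).re * (deriv (deriv f) t).im - (deriv f t).im * (deriv (deriv f) t).re) /
    ‖deriv f t‖ ^ 3

noncomputable def gfun (t : ℝ) : ℝ := Real.sqrt (1 + Real.sin t ^ 2)

lemma g_pos (t : ℝ) : 0 < gfun t := Real.sqrt_pos.2 (by positivity)

lemma g_sq (t : ℝ) : gfun t ^ 2 = 1 + Real.sin t ^ 2 :=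
  Real.sq_sqrt (by positivity)

lemma cont_p : Continuous (fun r : ℝ => Real.sin r ^ 2 / Real.sqrt (1 + Real.sin r ^ 2)) := by
  apply Continuous.div (by continuity) (by continuity)
  exact fun r => ne_of_gt (g_pos r)

lemma hxi (t : ℝ) : HasDerivAt xi (Real.sin t ^ 2 / gfun t) t :=
  (cont_p.integral_hasStrictDerivAt 0 t).hasDerivAt

noncomputable def D1 (t : ℝ) : ℂ :=
  (Real.cos t : ℂ) + ((Real.sin t ^ 2 / gfun t : ℝ) : ℂ) * Complex.I

lemma hE (t : ℝ) : HasDerivAt E (D1 t) t := by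
  have h1 := (Real.hasDerivAt_sin t).ofReal_comp
  have h2 := ((hxi t).ofReal_comp).mul_const Complex.I
  exact h1.add h2

lemma derivE : deriv E = D1 := funext fun t => (hE t).deriv

lemma hg (t : ℝ) : HasDerivAt gfun (Real.sin t * Real.cos t / gfun t) t := by
  have h : HasDerivAt (fun r : ℝ => 1 + Real.sin r ^ 2)
      (2 * Real.sin t * Real.cos t) t := by
    simpa using ((Real.hasDerivAt_sin t).pow 2).const_add (1:ℝ)
  have h2 := h.sqrt (by positivity)
  convert h2 using 1
  · rfl
  have := g_pos t
  rw [show Real.sqrt (1 + Real.sin t ^ 2) = gfun t from rfl]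
  field_simp

noncomputable def q (t : ℝ) : ℝ :=
  ((2 * Real.sin t ^ 1 * Real.cos t) * gfun t -
    Real.sin t ^ 2 * (Real.sin t * Real.cos t / gfun t)) / gfun t ^ 2

lemma hp (t : ℝ) : HasDerivAt (fun r => Real.sin r ^ 2 / gfun r) (q t) t :=
  ((Real.hasDerivAt_sin t).pow 2).div (hg t) (ne_of_gt (g_pos t))

noncomputable def D2 (t : ℝ) : ℂ :=
  ((-Real.sin t : ℝ) : ℂ) + ((q t : ℝ) : ℂ) * Complex.I

lemma hD1 (t : ℝ) : HasDerivAt D1 (D2 t) t := by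
  have h1 := (Real.hasDerivAt_cos t).ofReal_comp
  have h2 := ((hp t).ofReal_comp).mul_const Complex.I
  exact h1.add h2

theorem stmt_2 (t : ℝ) : signedCurvature E t = 2 * Real.sin t := by
  have hd2 : deriv (deriv E) t = D2 t := by
    rw [derivE]; exact (hD1 t).deriv
  have hg0 := g_pos t
  have hgsq := g_sq t
  have hcs : Real.cos t ^ 2 = 1 - Real.sin t ^ 2 := by
    have := Real.sin_sq_add_cos_sq t; linarith
  have hre1 : (D1 t).re = Real.cos t := by
    simp only [D1, Complex.add_re, Complex.ofReal_re, Complex.mul_re, Complex.ofReal_im,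
      Complex.I_re, Complex.I_im]; ring
  have him1 : (D1 t).im = Real.sin t ^ 2 / gfun t := by
    simp only [D1, Complex.add_im, Complex.ofReal_im, Complex.mul_im, Complex.ofReal_re,
      Complex.I_re, Complex.I_im]; ring
  have hre2 : (D2 t).re = -Real.sin t := by
    simp only [D2, Complex.add_re, Complex.ofReal_re, Complex.mul_re, Complex.ofReal_im,
      Complex.I_re, Complex.I_im]; ring
  have him2 : (D2 t).im = q t := by
    simp only [D2, Complex.add_im, Complex.ofReal_im, Complex.mul_im, Complex.ofReal_re,
      Complex.I_re, Complex.I_im]; ring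
  have habs : ‖D1 t‖ = 1 / gfun t := by
    rw [Complex.norm_def, Complex.normSq_apply, hre1, him1]
    have he : Real.cos t * Real.cos t + (Real.sin t ^ 2 / gfun t) * (Real.sin t ^ 2 / gfun t)
        = (1 / gfun t) ^ 2 := by
      field_simp
      linear_combination Real.cos t^2 * hgsq + (1 + Real.sin t^2) * hcs
    rw [he, Real.sqrt_sq (by positivity)]
  unfold signedCurvature
  rw [hd2, derivE, hre1, him1, hre2, him2, habs]
  have hq : q t = Real.sin t * Real.cos t * (2 + Real.sin t ^ 2) / gfun t ^ 3 := by
    unfold q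
    field_simp
    linear_combination 2*Real.sin t*Real.cos t*hgsq
  rw [hq]
  field_simp
  linear_combination Real.sin t * ((2+Real.sin t^2)*hcs + Real.sin t^2 * hgsq)
end

section
/- Let d = ξ(π) with ξ'(t) = sin²t/√(1+sin²t), ξ(0)=0, and define g(t) = (sin³t + 4d)·ξ(t) − 4d². Then g is strictly increasing on (0,π) and g(π) = 0; hence g(t) < 0 for t ∈ [0,π). -/
open Real

private lemma f_cont : Continuous (fun r => Real.sin r ^ 2 / Real.sqrt (1 + Real.sin r ^ 2)) := by
  apply Continuous.div (by continuity) (by continuity)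
  intro x
  rw [Real.sqrt_ne_zero']
  nlinarith [sq_nonneg (Real.sin x)]

private lemma f_nonneg (r : ℝ) : 0 ≤ Real.sin r ^ 2 / Real.sqrt (1 + Real.sin r ^ 2) :=
  div_nonneg (sq_nonneg _) (Real.sqrt_nonneg _)

private lemma xi_hasDerivAt (t : ℝ) :
    HasDerivAt xi (Real.sin t ^ 2 / Real.sqrt (1 + Real.sin t ^ 2)) t :=
  (f_cont.integral_hasStrictDerivAt 0 t).hasDerivAt

private lemma xi_nonneg {t : ℝ} (ht : 0 ≤ t) : 0 ≤ xi t :=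
  intervalIntegral.integral_nonneg ht (fun r _ => f_nonneg r)

private lemma xi_le {s t : ℝ} (h : s ≤ t) : xi s ≤ xi t := by
  have h1 : xi s + ∫ r in s..t, Real.sin r ^ 2 / Real.sqrt (1 + Real.sin r ^ 2) = xi t :=
    intervalIntegral.integral_add_adjacent_intervals
      (f_cont.intervalIntegrable _ _) (f_cont.intervalIntegrable _ _)
  have h2 : 0 ≤ ∫ r in s..t, Real.sin r ^ 2 / Real.sqrt (1 + Real.sin r ^ 2) :=
    intervalIntegral.integral_nonneg h (fun r _ => f_nonneg r)
  linarith

private lemma d_pos : 0 < xi π := by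
  apply intervalIntegral.intervalIntegral_pos_of_pos_on (f_cont.intervalIntegrable _ _)
  · intro x hx
    have hs : 0 < Real.sin x := Real.sin_pos_of_pos_of_lt_pi hx.1 hx.2
    apply div_pos (by positivity)
    apply Real.sqrt_pos.2
    nlinarith
  · exact Real.pi_pos

theorem stmt_11 (d : ℝ) (hd : d = xi π) (g : ℝ → ℝ)
    (hg : ∀ t, g t = (Real.sin t ^ 3 + 4 * d) * xi t - 4 * d ^ 2) :
    StrictMonoOn g (Set.Ioo 0 π) ∧ g π = 0 ∧ ∀ t ∈ Set.Ico 0 π, g t < 0 := by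
  have hgfun : g = fun t => (Real.sin t ^ 3 + 4 * d) * xi t - 4 * d ^ 2 := funext hg
  have hdpos : 0 < d := hd ▸ d_pos
  -- derivative of g
  have hderiv : ∀ t, HasDerivAt g
      (3 * Real.sin t ^ 2 * Real.cos t * xi t
        + (Real.sin t ^ 3 + 4 * d) * (Real.sin t ^ 2 / Real.sqrt (1 + Real.sin t ^ 2))) t := by
    intro t
    rw [hgfun]
    have h1 : HasDerivAt (fun t => Real.sin t ^ 3 + 4 * d) (3 * Real.sin t ^ 2 * Real.cos t) t := by
      have := ((Real.hasDerivAt_sin t).pow 3).add_const (4 * d)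
      simpa [mul_comm, mul_assoc, mul_left_comm] using this
    have := (h1.mul (xi_hasDerivAt t)).sub_const (4 * d ^ 2)
    exact this
  have hdiff : Differentiable ℝ g := fun t => (hderiv t).differentiableAt
  -- positivity of derivative on Ioo 0 π
  have hpos : ∀ t ∈ Set.Ioo (0:ℝ) π, 0 < deriv g t := by
    intro t ht
    rw [(hderiv t).deriv]
    set c := Real.cos t
    set sn := Real.sin t
    set s := Real.sqrt (1 + sn ^ 2) with hs
    have hsn : 0 < sn := Real.sin_pos_of_pos_of_lt_pi ht.1 ht.2
    have hs2 : s ^ 2 = 1 + sn ^ 2 := Real.sq_sqrt (by positivity)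
    have hspos : 0 < s := Real.sqrt_pos.2 (by positivity)
    have hc2 : c ^ 2 = 1 - sn ^ 2 := by
      have := Real.sin_sq_add_cos_sq t; nlinarith
    have hcs : -1 ≤ c * s := by nlinarith [sq_nonneg (c * s + 1), sq_nonneg (1 - c ^ 2), sq_nonneg (c*s - 1)]
    have hxi0 : 0 ≤ xi t := xi_nonneg ht.1.le
    have hxid : xi t ≤ d := hd ▸ xi_le ht.2.le
    -- key: 3 * c * xi t * s + sn^3 + 4*d > 0
    have hkey : 0 < 3 * c * xi t * s + sn ^ 3 + 4 * d := by
      have h1 : -(xi t) ≤ c * xi t * s := by nlinarith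
      nlinarith [pow_pos hsn 3]
    have heq : 3 * sn ^ 2 * c * xi t + (sn ^ 3 + 4 * d) * (sn ^ 2 / s)
        = sn ^ 2 * ((3 * c * xi t * s + sn ^ 3 + 4 * d) / s) := by
      field_simp
      ring
    rw [heq]
    positivity
  have hmono : StrictMonoOn g (Set.Icc 0 π) := by
    apply strictMonoOn_of_deriv_pos (convex_Icc 0 π) hdiff.continuous.continuousOn
    intro x hx
    rw [interior_Icc] at hx
    exact hpos x hx
  have hgpi : g π = 0 := by
    rw [hg, Real.sin_pi, hd]; ring
  refine ⟨hmono.mono (fun x hx => ⟨hx.1.le, hx.2.le⟩), hgpi, ?_⟩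
  intro t ht
  have := hmono ⟨ht.1, ht.2.le⟩ ⟨le_refl 0 |>.trans Real.pi_pos.le, le_refl π⟩ ht.2
  · linarith [hgpi ▸ this]
end

section
/- Let F : [0,L] → ℂ be a unit speed left c-curve from (0, direction angle 0) with turning angle exactly π ending on the line Im z = d (where d = ξ(π)), whose bending energy equals d, and which neither begins nor ends with a line segment (its direction angle τ satisfies 0 < τ(s) < π for s ∈ (0,L)). Then F is unique: any two such curves are equal; in particular F equals the arclength parameterization of E_{[0,π]} where E(t) = sin t + i·ξ(t). -/
open Real MeasureTheory

/-- Direction angle of the unit speed curve with curvature κ and initial direction angle 0. -/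
noncomputable def dirAngle (κ : ℝ → ℝ) (s : ℝ) : ℝ := ∫ r in (0:ℝ)..s, κ r

/-- The unit speed curve starting at 0 with direction angle 0 and signed curvature κ. -/
noncomputable def curveOf (κ : ℝ → ℝ) (s : ℝ) : ℂ :=
  ∫ r in (0:ℝ)..s, Complex.exp (dirAngle κ r * Complex.I)

/-- `IsOptimalUTurn L κ` says the unit speed curve of length `L` with signed curvature `κ`,
starting at 0 with direction angle 0, is a left c-curve with turning angle exactly π, ending on
the line Im z = ξ(π), with bending energy ξ(π), whose direction angle lies strictly between 0 and π
in the interior (so it neither begins nor ends with a line segment). -/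
def IsOptimalUTurn (L : ℝ) (κ : ℝ → ℝ) : Prop :=
  0 < L ∧
  IntervalIntegrable κ volume 0 L ∧
  IntervalIntegrable (fun s => κ s ^ 2) volume 0 L ∧
  (∀ᵐ s ∂(volume.restrict (Set.Icc 0 L)), 0 ≤ κ s) ∧
  (∫ s in (0:ℝ)..L, κ s) = π ∧
  (curveOf κ L).im = xi π ∧
  (1 / 4) * (∫ s in (0:ℝ)..L, κ s ^ 2) = xi π ∧
  (∀ s ∈ Set.Ioo 0 L, dirAngle κ s ∈ Set.Ioo 0 π)

open Set ENNReal



lemma sin_sq_div_cont : Continuous (fun u : ℝ => Real.sin u ^ 2 / Real.sqrt (1 + Real.sin u ^ 2)) := by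
  apply Continuous.div ((Real.continuous_sin.pow 2)) (Real.continuous_sqrt.comp (by continuity))
  intro x
  exact (Real.sqrt_pos.mpr (by positivity)).ne'

lemma sqrt_sin_cont : Continuous (fun u : ℝ => Real.sqrt (Real.sin u)) :=
  Real.continuous_sqrt.comp Real.continuous_sin

/-- symmetry of ∫₀^π f(sin) about π/2 -/
lemma integral_sin_symm (f : ℝ → ℝ) (hf : Continuous (fun u => f (Real.sin u))) :
    ∫ u in (0:ℝ)..π, f (Real.sin u) = 2 * ∫ u in (0:ℝ)..(π/2), f (Real.sin u) := by
  have h1 : ∫ u in (0:ℝ)..(π/2), f (Real.sin u) = ∫ u in (π/2)..π, f (Real.sin u) := by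
    have h0 := intervalIntegral.integral_comp_sub_left (a := (0:ℝ)) (b := π/2)
      (fun x => f (Real.sin x)) π
    have h2 : (∫ x in (0:ℝ)..(π/2), (fun x => f (Real.sin x)) (π - x)) = ∫ x in (0:ℝ)..(π/2), f (Real.sin x) := by
      apply intervalIntegral.integral_congr
      intro x _
      simp [Real.sin_pi_sub]
    rw [h2] at h0
    rw [h0]
    have e1 : π - π/2 = π/2 := by ring
    rw [e1, sub_zero]
  have h3 : ∫ u in (0:ℝ)..π, f (Real.sin u) =
      (∫ u in (0:ℝ)..(π/2), f (Real.sin u)) + ∫ u in (π/2)..π, f (Real.sin u) := by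
    rw [intervalIntegral.integral_add_adjacent_intervals] <;> exact hf.intervalIntegrable _ _
  rw [h3, ← h1]; ring

lemma half_subst : ∫ u in (0:ℝ)..(π/2), Real.sqrt (Real.sin u)
    = 2 * ∫ t in (0:ℝ)..(π/2), Real.sin t ^ 2 / Real.sqrt (1 + Real.sin t ^ 2) := by
  have hpi2 : (0:ℝ) < π/2 := by positivity
  set f : ℝ → ℝ := fun t => Real.arcsin (Real.sin t ^ 2) with hf_def
  set f' : ℝ → ℝ := fun t => 2 * Real.sin t / Real.sqrt (1 + Real.sin t ^ 2) with hf'_def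
  have hf : ContinuousOn f (uIcc 0 (π/2)) :=
    (Real.continuous_arcsin.comp ((Real.continuous_sin.pow 2))).continuousOn
  have hf' : ContinuousOn f' (uIcc 0 (π/2)) := by
    apply Continuous.continuousOn
    apply Continuous.div (by continuity) (Real.continuous_sqrt.comp (by continuity))
    intro x
    exact (Real.sqrt_pos.mpr (by positivity)).ne'
  have hff' : ∀ x ∈ Ioo (min 0 (π/2)) (max 0 (π/2)), HasDerivWithinAt f (f' x) (Ioi x) x := by
    rw [min_eq_left hpi2.le, max_eq_right hpi2.le]
    intro x hx
    have hsx : 0 < Real.sin x := Real.sin_pos_of_pos_of_lt_pi hx.1 (hx.2.trans (by linarith [Real.pi_pos]))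
    have hcx : 0 < Real.cos x := Real.cos_pos_of_mem_Ioo ⟨by linarith [Real.pi_pos, hx.1], hx.2⟩
    have hs1 : Real.sin x < 1 := by
      by_contra h
      push_neg at h
      have := Real.sin_le_one x
      have hsx1 : Real.sin x = 1 := le_antisymm this h
      have : Real.cos x = 0 := by
        nlinarith [Real.sin_sq_add_cos_sq x]
      linarith
    have hinner : HasDerivAt (fun t => Real.sin t ^ 2) (2 * Real.sin x * Real.cos x) x := by
      simpa [mul_comm, mul_assoc, mul_left_comm] using (Real.hasDerivAt_sin x).fun_pow 2
    have hne1 : Real.sin x ^ 2 ≠ -1 := by nlinarith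
    have hne2 : Real.sin x ^ 2 ≠ 1 := by nlinarith
    have houter := Real.hasDerivAt_arcsin hne1 hne2
    have hcomp := houter.comp x hinner
    have heq : 1 / Real.sqrt (1 - (Real.sin x ^ 2) ^ 2) * (2 * Real.sin x * Real.cos x) = f' x := by
      have h14 : 1 - (Real.sin x ^ 2) ^ 2 = Real.cos x ^ 2 * (1 + Real.sin x ^ 2) := by
        nlinarith [Real.sin_sq_add_cos_sq x]
      rw [h14, Real.sqrt_mul (sq_nonneg _), Real.sqrt_sq hcx.le]
      have h15 : 0 < Real.sqrt (1 + Real.sin x ^ 2) := Real.sqrt_pos.mpr (by positivity)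
      field_simp [hf'_def]
      simp only [hf'_def]
      field_simp
    rw [heq] at hcomp
    exact hcomp.hasDerivWithinAt
  have hg : ContinuousOn (fun u => Real.sqrt (Real.sin u)) (f '' uIcc 0 (π/2)) :=
    sqrt_sin_cont.continuousOn
  have key := intervalIntegral.integral_comp_smul_deriv'' hf hff' hf' hg
  have hf0 : f 0 = 0 := by simp [hf_def]
  have hfpi2 : f (π/2) = π/2 := by simp [hf_def, Real.sin_pi_div_two, Real.arcsin_one]
  rw [hf0, hfpi2] at key
  rw [← key]
  rw [← intervalIntegral.integral_const_mul]
  apply intervalIntegral.integral_congr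
  intro x hx
  rw [uIcc_of_le hpi2.le] at hx
  have hsx : 0 ≤ Real.sin x := Real.sin_nonneg_of_nonneg_of_le_pi hx.1 (hx.2.trans (by linarith [Real.pi_pos]))
  have h1 : Real.sin (f x) = Real.sin x ^ 2 := by
    apply Real.sin_arcsin
    · nlinarith
    · nlinarith [Real.sin_le_one x]
  simp only [Function.comp, smul_eq_mul, h1]
  rw [Real.sqrt_sq hsx]
  rw [hf'_def]
  have h15 : 0 < Real.sqrt (1 + Real.sin x ^ 2) := Real.sqrt_pos.mpr (by positivity)
  field_simp

lemma key_identity : (∫ u in (0:ℝ)..π, Real.sqrt (Real.sin u)) = 2 * xi π := by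
  have h1 := integral_sin_symm (fun w => Real.sqrt w) sqrt_sin_cont
  have h2 := integral_sin_symm (fun w => w ^ 2 / Real.sqrt (1 + w ^ 2)) sin_sq_div_cont
  rw [xi, h2, h1, half_subst]



section Tau

variable {L : ℝ} {κ : ℝ → ℝ}

lemma tau_zero (κ : ℝ → ℝ) : dirAngle κ 0 = 0 := intervalIntegral.integral_same

lemma tau_mono (hL : 0 ≤ L) (hκi : IntervalIntegrable κ volume 0 L)
    (hnn : ∀ᵐ s ∂(volume.restrict (Set.Icc 0 L)), 0 ≤ κ s) :
    MonotoneOn (dirAngle κ) (Set.Icc 0 L) := by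
  intro s hs s' hs' hss
  have hsub : Set.uIcc s s' ⊆ Set.uIcc 0 L := by
    rw [Set.uIcc_of_le hss, Set.uIcc_of_le hL]
    exact Set.Icc_subset_Icc hs.1 hs'.2
  have h1 : IntervalIntegrable κ volume s s' := hκi.mono_set hsub
  have h2 : IntervalIntegrable κ volume 0 s := hκi.mono_set (by
    rw [Set.uIcc_of_le hs.1, Set.uIcc_of_le hL]; exact Set.Icc_subset_Icc le_rfl hs.2)
  have hadd : dirAngle κ s + ∫ r in s..s', κ r = dirAngle κ s' :=
    intervalIntegral.integral_add_adjacent_intervals h2 h1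
  have hpos : 0 ≤ ∫ r in s..s', κ r := by
    apply intervalIntegral.integral_nonneg_of_ae_restrict hss
    exact ae_restrict_of_ae_restrict_of_subset (Set.Icc_subset_Icc hs.1 hs'.2) hnn
  show dirAngle κ s ≤ dirAngle κ s'
  linarith

lemma tau_cont (hL : 0 ≤ L) (hκi : IntervalIntegrable κ volume 0 L) :
    ContinuousOn (dirAngle κ) (Set.Icc 0 L) := by
  have h := intervalIntegral.continuousOn_primitive_interval' hκi
    (Set.left_mem_uIcc (a := (0:ℝ)) (b := L))
  rw [Set.uIcc_of_le hL] at h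
  exact h

lemma map_tau (hL : 0 ≤ L) (hκi : IntervalIntegrable κ volume 0 L)
    (hnn : ∀ᵐ s ∂(volume.restrict (Set.Icc 0 L)), 0 ≤ κ s)
    {a : ℝ} (ha : a ∈ Set.Icc 0 L) :
    Measure.map (dirAngle κ)
      ((volume.restrict (Set.Ioc 0 a)).withDensity (fun s => ENNReal.ofReal (κ s))) =
      volume.restrict (Set.Ioc 0 (dirAngle κ a)) := by
  have hmono := tau_mono hL hκi hnn
  have hcont := tau_cont hL hκi
  set τ := dirAngle κ with hτdef
  have hIccsub : Set.Icc 0 a ⊆ Set.Icc 0 L := Set.Icc_subset_Icc le_rfl ha.2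
  have hconta : ContinuousOn τ (Set.Icc 0 a) := hcont.mono hIccsub
  set ν := (volume.restrict (Set.Ioc 0 a)).withDensity (fun s => ENNReal.ofReal (κ s)) with hν
  have hτae0 : AEMeasurable τ (volume.restrict (Set.Ioc 0 a)) :=
    (hconta.mono Set.Ioc_subset_Icc_self).aemeasurable measurableSet_Ioc
  have hτae : AEMeasurable τ ν := hτae0.mono_ac (withDensity_absolutelyContinuous _ _)
  have hκint : ∀ b ∈ Set.Icc 0 a, IntervalIntegrable κ volume 0 b := fun b hb =>
    hκi.mono_set (by
      rw [Set.uIcc_of_le hb.1, Set.uIcc_of_le hL]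
      exact Set.Icc_subset_Icc le_rfl (hb.2.trans ha.2))
  have hnn' : ∀ b ∈ Set.Icc 0 a, (∀ᵐ s ∂(volume.restrict (Set.Ioc 0 b)), 0 ≤ κ s) := fun b hb =>
    ae_restrict_of_ae_restrict_of_subset
      (Set.Ioc_subset_Icc_self.trans (Set.Icc_subset_Icc le_rfl (hb.2.trans ha.2))) hnn
  have hν_Ioc : ∀ b ∈ Set.Icc 0 a, ν (Set.Ioc 0 b) = ENNReal.ofReal (τ b) := by
    intro b hb
    rw [hν, withDensity_apply _ measurableSet_Ioc, Measure.restrict_restrict measurableSet_Ioc,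
      Set.inter_eq_left.mpr (Set.Ioc_subset_Ioc le_rfl hb.2)]
    rw [← ofReal_integral_eq_lintegral_ofReal ((hκint b hb).1) (hnn' b hb)]
    rw [← intervalIntegral.integral_of_le hb.1]
    rfl
  have hν_compl : ν ((Set.Ioc 0 a)ᶜ) = 0 := by
    rw [hν, withDensity_apply _ measurableSet_Ioc.compl,
      Measure.restrict_restrict measurableSet_Ioc.compl, Set.compl_inter_self]
    simp
  have hν_inter : ∀ S : Set ℝ, ν S = ν (S ∩ Set.Ioc 0 a) := by
    intro S
    apply le_antisymm
    · calc ν S ≤ ν ((S ∩ Set.Ioc 0 a) ∪ (Set.Ioc 0 a)ᶜ) := measure_mono (by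
            intro x hx
            by_cases h : x ∈ Set.Ioc 0 a
            exacts [Or.inl ⟨hx, h⟩, Or.inr h])
      _ ≤ ν (S ∩ Set.Ioc 0 a) + ν ((Set.Ioc 0 a)ᶜ) := measure_union_le _ _
      _ = ν (S ∩ Set.Ioc 0 a) := by rw [hν_compl, add_zero]
    · exact measure_mono Set.inter_subset_left
  have hτ0 : τ 0 = 0 := intervalIntegral.integral_same
  have hτb_mono : ∀ b c, b ∈ Set.Icc 0 a → c ∈ Set.Icc 0 a → b ≤ c → τ b ≤ τ c :=
    fun b c hb hc h => hmono (hIccsub hb) (hIccsub hc) h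
  have hτnn : ∀ b ∈ Set.Icc 0 a, 0 ≤ τ b := fun b hb => by
    rw [← hτ0]
    exact hτb_mono 0 b ⟨le_rfl, ha.1⟩ hb hb.1
  haveI hνfin : IsFiniteMeasure ν := by
    constructor
    rw [hν_inter Set.univ, Set.univ_inter, hν_Ioc a ⟨ha.1, le_rfl⟩]
    exact ENNReal.ofReal_lt_top
  apply Measure.ext_of_Iic
  intro u
  rw [Measure.map_apply_of_aemeasurable hτae measurableSet_Iic,
    Measure.restrict_apply measurableSet_Iic]
  rcases lt_or_ge u 0 with hu | hu
  · have h1 : τ ⁻¹' Set.Iic u ∩ Set.Ioc 0 a = ∅ := by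
      ext s
      simp only [Set.mem_inter_iff, Set.mem_preimage, Set.mem_Iic, Set.mem_Ioc,
        Set.mem_empty_iff_false, iff_false, not_and]
      intro hτs hs0 hsa
      exfalso
      have := hτnn s ⟨hs0.le, hsa⟩
      linarith
    have h2 : Set.Iic u ∩ Set.Ioc 0 (τ a) = ∅ := by
      ext s
      simp only [Set.mem_inter_iff, Set.mem_Iic, Set.mem_Ioc, Set.mem_empty_iff_false, iff_false,
        not_and]
      intro hsu hs0 hsa
      exfalso
      linarith
    rw [hν_inter, h1, h2]
    simp
  · set A := {s | s ∈ Set.Icc 0 a ∧ τ s ≤ u} with hA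
    have hA0 : 0 ∈ A := ⟨⟨le_rfl, ha.1⟩, by rw [hτ0]; exact hu⟩
    have hAbdd : BddAbove A := BddAbove.mono (fun s hs => hs.1) bddAbove_Icc
    have hAclosed : IsClosed A :=
      hconta.preimage_isClosed_of_isClosed isClosed_Icc isClosed_Iic
    set b := sSup A with hb
    have hbA : b ∈ A := hAclosed.csSup_mem ⟨0, hA0⟩ hAbdd
    have hb_mem : b ∈ Set.Icc 0 a := hbA.1
    have hτb_le : τ b ≤ u := hbA.2
    have hpre : τ ⁻¹' Set.Iic u ∩ Set.Ioc 0 a = Set.Ioc 0 b := by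
      ext s
      simp only [Set.mem_inter_iff, Set.mem_preimage, Set.mem_Iic, Set.mem_Ioc]
      constructor
      · rintro ⟨hτs, hs0, hsa⟩
        exact ⟨hs0, le_csSup hAbdd ⟨⟨hs0.le, hsa⟩, hτs⟩⟩
      · rintro ⟨hs0, hsb⟩
        have hs_mem : s ∈ Set.Icc 0 a := ⟨hs0.le, hsb.trans hb_mem.2⟩
        exact ⟨(hτb_mono s b hs_mem hb_mem hsb).trans hτb_le, hs0, hs_mem.2⟩
    have hτb : τ b = min u (τ a) := by
      rcases le_or_gt (τ a) u with h | h
      · have haA : a ∈ A := ⟨⟨ha.1, le_rfl⟩, h⟩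
        have hba : b = a :=
          le_antisymm (csSup_le ⟨0, hA0⟩ fun x hx => hx.1.2) (le_csSup hAbdd haA)
        rw [hba, min_eq_right h]
      · rw [min_eq_left h.le]
        refine le_antisymm hτb_le ?_
        have hu_mem : u ∈ Set.Icc (τ 0) (τ a) := by
          rw [hτ0]; exact ⟨hu, h.le⟩
        obtain ⟨c, hc, hτc⟩ := intermediate_value_Icc ha.1 hconta hu_mem
        have hcb := hτb_mono c b hc hb_mem (le_csSup hAbdd ⟨hc, hτc.le⟩)
        linarith [hτc.le, hτc.ge]
    have hIocmin : Set.Iic u ∩ Set.Ioc 0 (τ a) = Set.Ioc 0 (min u (τ a)) := by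
      ext s
      simp only [Set.mem_inter_iff, Set.mem_Iic, Set.mem_Ioc, le_min_iff]
      tauto
    rw [hν_inter, hpre, hν_Ioc b hb_mem, hτb, hIocmin, Real.volume_Ioc, sub_zero]

lemma key_lintegral (hL : 0 ≤ L) (hκi : IntervalIntegrable κ volume 0 L)
    (hnn : ∀ᵐ s ∂(volume.restrict (Set.Icc 0 L)), 0 ≤ κ s)
    {a : ℝ} (ha : a ∈ Set.Icc 0 L) {g : ℝ → ℝ≥0∞} (hg : Measurable g) :
    ∫⁻ s in Set.Ioc 0 a, g (dirAngle κ s) * ENNReal.ofReal (κ s) =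
    ∫⁻ u in Set.Ioc 0 (dirAngle κ a), g u := by
  set τ := dirAngle κ with hτdef
  have hmap := map_tau hL hκi hnn ha
  have hcont := tau_cont hL hκi
  have hIccsub : Set.Icc 0 a ⊆ Set.Icc 0 L := Set.Icc_subset_Icc le_rfl ha.2
  have hτae0 : AEMeasurable τ (volume.restrict (Set.Ioc 0 a)) :=
    ((hcont.mono hIccsub).mono Set.Ioc_subset_Icc_self).aemeasurable measurableSet_Ioc
  set ν := (volume.restrict (Set.Ioc 0 a)).withDensity (fun s => ENNReal.ofReal (κ s)) with hν
  have hτae : AEMeasurable τ ν := hτae0.mono_ac (withDensity_absolutelyContinuous _ _)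
  have hκIO : IntegrableOn κ (Set.Ioc 0 a) := by
    have : IntervalIntegrable κ volume 0 a := hκi.mono_set (by
      rw [Set.uIcc_of_le ha.1, Set.uIcc_of_le hL]
      exact Set.Icc_subset_Icc le_rfl ha.2)
    exact this.1
  have hκae : AEMeasurable (fun s => ENNReal.ofReal (κ s)) (volume.restrict (Set.Ioc 0 a)) :=
    ENNReal.measurable_ofReal.comp_aemeasurable hκIO.aestronglyMeasurable.aemeasurable
  calc ∫⁻ s in Set.Ioc 0 a, g (τ s) * ENNReal.ofReal (κ s)
      = ∫⁻ s, ((fun s => ENNReal.ofReal (κ s)) * fun s => g (τ s)) s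
        ∂(volume.restrict (Set.Ioc 0 a)) := by
        apply lintegral_congr
        intro s
        simp [mul_comm]
    _ = ∫⁻ s, g (τ s) ∂ν :=
        (lintegral_withDensity_eq_lintegral_mul₀ hκae (hg.comp_aemeasurable hτae0)).symm
    _ = ∫⁻ u, g u ∂(Measure.map τ ν) := (lintegral_map' hg.aemeasurable hτae).symm
    _ = ∫⁻ u in Set.Ioc 0 (τ a), g u := by rw [hmap]

end Tau

/-- The strictly increasing "inverse arclength" function, as an `ℝ≥0∞`-valued integral. -/
noncomputable def Phi (v : ℝ) : ℝ≥0∞ :=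
  ∫⁻ u in Set.Ioc 0 v, ENNReal.ofReal ((2 * Real.sqrt (Real.sin u))⁻¹)

lemma Phi_meas : Measurable (fun u : ℝ => ENNReal.ofReal ((2 * Real.sqrt (Real.sin u))⁻¹)) := by
  apply ENNReal.measurable_ofReal.comp
  exact ((continuous_const.mul (Real.continuous_sqrt.comp Real.continuous_sin)).measurable).inv

lemma Phi_lt {v₁ v₂ : ℝ} (h1 : 0 ≤ v₁) (hlt : v₁ < v₂) (h2 : v₂ ≤ π) (hfin : Phi v₁ ≠ ⊤) :
    Phi v₁ < Phi v₂ := by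
  have hsplit : Phi v₂ = Phi v₁ +
      ∫⁻ u in Set.Ioc v₁ v₂, ENNReal.ofReal ((2 * Real.sqrt (Real.sin u))⁻¹) := by
    rw [Phi, Phi, ← lintegral_union measurableSet_Ioc (Set.Ioc_disjoint_Ioc_of_le le_rfl),
      Set.Ioc_union_Ioc_eq_Ioc h1 hlt.le]
  have hpos : 0 < ∫⁻ u in Set.Ioc v₁ v₂, ENNReal.ofReal ((2 * Real.sqrt (Real.sin u))⁻¹) := by
    rw [lintegral_pos_iff_support Phi_meas]
    have hsub : Set.Ioo v₁ v₂ ⊆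
        Function.support (fun u : ℝ => ENNReal.ofReal ((2 * Real.sqrt (Real.sin u))⁻¹)) := by
      intro u hu
      have hsin : 0 < Real.sin u :=
        Real.sin_pos_of_pos_of_lt_pi (lt_of_le_of_lt h1 hu.1) (lt_of_lt_of_le hu.2 h2)
      have : 0 < (2 * Real.sqrt (Real.sin u))⁻¹ := by
        apply inv_pos.mpr
        positivity
      simp only [Function.mem_support, ne_eq, ENNReal.ofReal_eq_zero, not_le]
      exact this
    calc (0:ℝ≥0∞) < ENNReal.ofReal (v₂ - v₁) := by
          rw [ENNReal.ofReal_pos]; linarith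
      _ = (volume.restrict (Set.Ioc v₁ v₂)) (Set.Ioo v₁ v₂) := by
          rw [Measure.restrict_apply measurableSet_Ioo,
            Set.inter_eq_left.mpr Set.Ioo_subset_Ioc_self, Real.volume_Ioo]
      _ ≤ _ := measure_mono hsub
  rw [hsplit]
  exact ENNReal.lt_add_right hfin hpos.ne'

lemma uturn_phi (L : ℝ) (κ : ℝ → ℝ) (h : IsOptimalUTurn L κ) :
    dirAngle κ L = π ∧ (∀ s ∈ Set.Icc 0 L, dirAngle κ s ∈ Set.Icc 0 π) ∧
    ∀ s ∈ Set.Icc 0 L, Phi (dirAngle κ s) = ENNReal.ofReal s := by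
  obtain ⟨hL, hκi, hκ2i, hnn, hturn, him, hen, hint⟩ := h
  set τ := dirAngle κ with hτdef
  have hτL : τ L = π := hturn
  have hmono := tau_mono hL.le hκi hnn
  have hcont := tau_cont hL.le hκi
  have hτ0 : τ 0 = 0 := intervalIntegral.integral_same
  have hτmem : ∀ s ∈ Set.Icc 0 L, τ s ∈ Set.Icc 0 π := by
    intro s hs
    constructor
    · rw [← hτ0]; exact hmono (Set.left_mem_Icc.mpr hL.le) hs hs.1
    · rw [← hτL]; exact hmono hs (Set.right_mem_Icc.mpr hL.le) hs.2
  set w : ℝ → ℝ := fun s => Real.sqrt (Real.sin (τ s)) with hw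
  have hwcont : ContinuousOn w (Set.Icc 0 L) :=
    (Real.continuous_sqrt.comp Real.continuous_sin).comp_continuousOn hcont
  have hw_nonneg : ∀ s, 0 ≤ w s := fun s => Real.sqrt_nonneg _
  -- integrability of κ * w
  have hwmeas : AEStronglyMeasurable w (volume.restrict (Set.Ioc 0 L)) :=
    ((hwcont.mono Set.Ioc_subset_Icc_self).aemeasurable measurableSet_Ioc).aestronglyMeasurable
  have hκw_int : IntegrableOn (fun s => κ s * w s) (Set.Ioc 0 L) := by
    have h1 : Integrable (fun s => w s * κ s) (volume.restrict (Set.Ioc 0 L)) := by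
      apply Integrable.bdd_mul (c := 1) hκi.1 hwmeas
      refine Filter.Eventually.of_forall fun s => ?_
      rw [Real.norm_eq_abs, abs_of_nonneg (hw_nonneg s)]
      exact Real.sqrt_le_one.mpr (Real.sin_le_one _)
    exact h1.congr (Filter.Eventually.of_forall fun s => mul_comm _ _)
  have hκw_ii : IntervalIntegrable (fun s => κ s * w s) volume 0 L := by
    rw [intervalIntegrable_iff_integrableOn_Ioc_of_le hL.le]
    exact hκw_int
  have hsin_int : IntervalIntegrable (fun s => Real.sin (τ s)) volume 0 L := by
    apply ContinuousOn.intervalIntegrable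
    rw [Set.uIcc_of_le hL.le]
    exact Real.continuous_sin.comp_continuousOn hcont
  -- imaginary part formula
  have him2 : (curveOf κ L).im = ∫ s in (0:ℝ)..L, Real.sin (τ s) := by
    have hInt : IntervalIntegrable (fun r => Complex.exp (↑(τ r) * Complex.I)) volume 0 L := by
      apply ContinuousOn.intervalIntegrable
      rw [Set.uIcc_of_le hL.le]
      exact Complex.continuous_exp.comp_continuousOn
        ((Complex.continuous_ofReal.comp_continuousOn hcont).mul continuousOn_const)
    have hcc := Complex.imCLM.intervalIntegral_comp_comm hInt
    rw [curveOf]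
    calc (∫ r in (0:ℝ)..L, Complex.exp (↑(dirAngle κ r) * Complex.I)).im
        = Complex.imCLM (∫ r in (0:ℝ)..L, Complex.exp (↑(τ r) * Complex.I)) := rfl
      _ = ∫ r in (0:ℝ)..L, Complex.imCLM (Complex.exp (↑(τ r) * Complex.I)) := hcc.symm
      _ = ∫ s in (0:ℝ)..L, Real.sin (τ s) := by
          apply intervalIntegral.integral_congr
          intro r _
          simp [Complex.exp_ofReal_mul_I_im]
  have hsinτ : ∫ s in (0:ℝ)..L, Real.sin (τ s) = xi π := by rw [← him2]; exact him
  -- ∫ κ w = 2 ξ(π)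
  have hκw_eq : ∫ s in (0:ℝ)..L, κ s * w s = 2 * xi π := by
    have hLmem : L ∈ Set.Icc (0:ℝ) L := ⟨hL.le, le_rfl⟩
    have hgmeas : Measurable (fun u : ℝ => ENNReal.ofReal (Real.sqrt (Real.sin u))) :=
      ENNReal.measurable_ofReal.comp (Real.continuous_sqrt.comp Real.continuous_sin).measurable
    have hkey := key_lintegral hL.le hκi hnn hLmem hgmeas
    rw [← hτdef] at hkey
    rw [hτL] at hkey
    have hnnIoc : ∀ᵐ s ∂(volume.restrict (Set.Ioc 0 L)), 0 ≤ κ s :=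
      ae_restrict_of_ae_restrict_of_subset Set.Ioc_subset_Icc_self hnn
    have hnn_mul : 0 ≤ᵐ[volume.restrict (Set.Ioc 0 L)] fun s => κ s * w s := by
      filter_upwards [hnnIoc] with s hs
      exact mul_nonneg hs (hw_nonneg s)
    have h1 : ENNReal.ofReal (∫ s in Set.Ioc 0 L, κ s * w s) =
        ∫⁻ s in Set.Ioc 0 L, ENNReal.ofReal (κ s * w s) :=
      ofReal_integral_eq_lintegral_ofReal hκw_int hnn_mul
    have h2 : ∫⁻ s in Set.Ioc 0 L, ENNReal.ofReal (κ s * w s) =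
        ∫⁻ s in Set.Ioc 0 L, ENNReal.ofReal (Real.sqrt (Real.sin (τ s))) * ENNReal.ofReal (κ s) := by
      apply lintegral_congr
      intro s
      rw [mul_comm (κ s) (w s), ENNReal.ofReal_mul (hw_nonneg s)]
    have hsqsin_int : IntegrableOn (fun u => Real.sqrt (Real.sin u)) (Set.Ioc 0 π) :=
      ((sqrt_sin_cont.continuousOn).integrableOn_compact isCompact_Icc).mono_set Set.Ioc_subset_Icc_self
    have h3 : ENNReal.ofReal (∫ u in Set.Ioc 0 π, Real.sqrt (Real.sin u)) =
        ∫⁻ u in Set.Ioc 0 π, ENNReal.ofReal (Real.sqrt (Real.sin u)) :=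
      ofReal_integral_eq_lintegral_ofReal hsqsin_int
        (Filter.Eventually.of_forall fun u => Real.sqrt_nonneg _)
    have hcomb : ENNReal.ofReal (∫ s in Set.Ioc 0 L, κ s * w s) =
        ENNReal.ofReal (∫ u in Set.Ioc 0 π, Real.sqrt (Real.sin u)) := by
      rw [h1, h2, hkey, ← h3]
    have hA : 0 ≤ ∫ s in Set.Ioc 0 L, κ s * w s := integral_nonneg_of_ae hnn_mul
    have hB : 0 ≤ ∫ u in Set.Ioc 0 π, Real.sqrt (Real.sin u) :=
      integral_nonneg_of_ae (Filter.Eventually.of_forall fun u => Real.sqrt_nonneg _)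
    have heq := (ENNReal.ofReal_eq_ofReal_iff hA hB).mp hcomb
    rw [intervalIntegral.integral_of_le hL.le, heq,
      ← intervalIntegral.integral_of_le Real.pi_pos.le, key_identity]
  -- the square integrates to zero
  have hsq_exp : ∀ s ∈ Set.uIcc (0:ℝ) L,
      (κ s - 2 * w s) ^ 2 = κ s ^ 2 - 4 * (κ s * w s) + 4 * Real.sin (τ s) := by
    intro s hs
    rw [Set.uIcc_of_le hL.le] at hs
    have hτs := hτmem s hs
    have hsin_nonneg : 0 ≤ Real.sin (τ s) :=
      Real.sin_nonneg_of_nonneg_of_le_pi hτs.1 hτs.2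
    have hww : w s ^ 2 = Real.sin (τ s) := Real.sq_sqrt hsin_nonneg
    calc (κ s - 2 * w s) ^ 2 = κ s ^ 2 - 4 * (κ s * w s) + 4 * (w s ^ 2) := by ring
    _ = κ s ^ 2 - 4 * (κ s * w s) + 4 * Real.sin (τ s) := by rw [hww]
  have hκsq : ∫ s in (0:ℝ)..L, κ s ^ 2 = 4 * xi π := by linarith [hen]
  have hsq : ∫ s in (0:ℝ)..L, (κ s - 2 * w s) ^ 2 = 0 := by
    rw [intervalIntegral.integral_congr hsq_exp]
    rw [intervalIntegral.integral_add (hκ2i.sub (hκw_ii.const_mul 4)) (hsin_int.const_mul 4),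
      intervalIntegral.integral_sub hκ2i (hκw_ii.const_mul 4),
      intervalIntegral.integral_const_mul, intervalIntegral.integral_const_mul]
    rw [hκsq, hκw_eq, hsinτ]
    ring
  -- a.e. equality κ = 2 w
  have hae : ∀ᵐ s ∂(volume.restrict (Set.Ioc 0 L)), κ s = 2 * w s := by
    have h0 : ∫ s in Set.Ioc 0 L, (κ s - 2 * w s) ^ 2 = 0 := by
      rw [← intervalIntegral.integral_of_le hL.le]; exact hsq
    have hint2 : IntegrableOn (fun s => (κ s - 2 * w s) ^ 2) (Set.Ioc 0 L) := by
      have h1 : IntegrableOn (fun s => κ s ^ 2 - 4 * (κ s * w s) + 4 * Real.sin (τ s))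
          (Set.Ioc 0 L) := ((hκ2i.sub (hκw_ii.const_mul 4)).add (hsin_int.const_mul 4)).1
      apply h1.congr_fun ?_ measurableSet_Ioc
      intro s hs
      exact (hsq_exp s (by rw [Set.uIcc_of_le hL.le]; exact Set.Ioc_subset_Icc_self hs)).symm
    have := (integral_eq_zero_iff_of_nonneg_ae
      (Filter.Eventually.of_forall fun s => sq_nonneg _) hint2).mp h0
    filter_upwards [this] with s hs
    have hzero : κ s - 2 * w s = 0 := by
      have : (κ s - 2 * w s) ^ 2 = 0 := hs
      exact pow_eq_zero_iff two_ne_zero |>.mp this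
    linarith
  refine ⟨hτL, hτmem, ?_⟩
  intro s hs
  have hkey := key_lintegral hL.le hκi hnn hs Phi_meas
  rw [← hτdef] at hkey
  rw [Phi, ← hkey]
  have hae' : ∀ᵐ r ∂(volume.restrict (Set.Ioc 0 s)),
      ENNReal.ofReal ((2 * Real.sqrt (Real.sin (τ r)))⁻¹) * ENNReal.ofReal (κ r) = 1 := by
    have h1 : ∀ᵐ r ∂(volume.restrict (Set.Ioc 0 s)), κ r = 2 * w r :=
      ae_restrict_of_ae_restrict_of_subset (Set.Ioc_subset_Ioc le_rfl hs.2) hae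
    have h2 : ∀ᵐ r ∂(volume.restrict (Set.Ioc 0 s)), r ∈ Set.Ioc 0 s :=
      ae_restrict_mem measurableSet_Ioc
    have h3 : ∀ᵐ r ∂(volume.restrict (Set.Ioc 0 s)), r ≠ s := by
      rw [MeasureTheory.ae_iff]
      have hsub : {a : ℝ | ¬a ≠ s} ⊆ ({s} : Set ℝ) := by
        intro r hr
        simpa using hr
      refine measure_mono_null hsub ?_
      exact le_antisymm ((Measure.restrict_apply_le _ _).trans (le_of_eq (measure_singleton s)))
        zero_le
    filter_upwards [h1, h2, h3] with r hκr hr hrs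
    have hrIoo : r ∈ Set.Ioo 0 L := ⟨hr.1, lt_of_le_of_ne (hr.2.trans hs.2) (by
      intro hrL
      exact hrs (le_antisymm hr.2 (by rw [hrL] at hr ⊢; exact hs.2.trans (le_of_eq rfl))))⟩
    have hτr := hint r ⟨hrIoo.1, hrIoo.2⟩
    have hsin_pos : 0 < Real.sin (τ r) := Real.sin_pos_of_pos_of_lt_pi hτr.1 hτr.2
    have hx : 0 < 2 * Real.sqrt (Real.sin (τ r)) := by positivity
    rw [hκr]
    rw [← ENNReal.ofReal_mul (inv_nonneg.mpr hx.le)]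
    rw [hw]
    rw [inv_mul_cancel₀ hx.ne']
    simp
  rw [lintegral_congr_ae hae']
  simp only [lintegral_one, Measure.restrict_apply MeasurableSet.univ, Set.univ_inter,
    Real.volume_Ioc, sub_zero]

theorem stmt_17 (L₁ L₂ : ℝ) (κ₁ κ₂ : ℝ → ℝ)
    (h₁ : IsOptimalUTurn L₁ κ₁) (h₂ : IsOptimalUTurn L₂ κ₂) :
    L₁ = L₂ ∧ ∀ s ∈ Set.Icc 0 L₁, curveOf κ₁ s = curveOf κ₂ s := by
  obtain ⟨hτL₁, hmem₁, hphi₁⟩ := uturn_phi L₁ κ₁ h₁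
  obtain ⟨hτL₂, hmem₂, hphi₂⟩ := uturn_phi L₂ κ₂ h₂
  have hL₁ := h₁.1
  have hL₂ := h₂.1
  have hPL₁ : Phi π = ENNReal.ofReal L₁ := by
    rw [← hτL₁]; exact hphi₁ L₁ ⟨hL₁.le, le_rfl⟩
  have hPL₂ : Phi π = ENNReal.ofReal L₂ := by
    rw [← hτL₂]; exact hphi₂ L₂ ⟨hL₂.le, le_rfl⟩
  have hL : L₁ = L₂ :=
    (ENNReal.ofReal_eq_ofReal_iff hL₁.le hL₂.le).mp (hPL₁.symm.trans hPL₂)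
  refine ⟨hL, ?_⟩
  have htau_eq : ∀ r ∈ Set.Icc 0 L₁, dirAngle κ₁ r = dirAngle κ₂ r := by
    intro r hr
    have hr2 : r ∈ Set.Icc 0 L₂ := by rw [← hL]; exact hr
    have e1 : Phi (dirAngle κ₁ r) = ENNReal.ofReal r := hphi₁ r hr
    have e2 : Phi (dirAngle κ₂ r) = ENNReal.ofReal r := hphi₂ r hr2
    have m1 := hmem₁ r hr
    have m2 := hmem₂ r hr2
    by_contra hne
    rcases lt_or_gt_of_ne hne with hlt | hlt
    · have := Phi_lt m1.1 hlt m2.2 (by rw [e1]; exact ENNReal.ofReal_ne_top)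
      rw [e1, e2] at this
      exact lt_irrefl _ this
    · have := Phi_lt m2.1 hlt m1.2 (by rw [e2]; exact ENNReal.ofReal_ne_top)
      rw [e1, e2] at this
      exact lt_irrefl _ this
  intro s hs
  rw [curveOf, curveOf]
  apply intervalIntegral.integral_congr
  intro r hr
  rw [Set.uIcc_of_le hs.1] at hr
  have := htau_eq r ⟨hr.1, hr.2.trans hs.2⟩
  simp only [this]
end
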